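/- Every permutation of [n] avoiding both 312 and 231 has no crossings: if σ∈S_n(312,231) then crs(σ) = 0. -/

import Mathlib

open Finset Polynomial Equiv

attribute [local instance] Classical.propDecidable

def isCrossing {n : ℕ} (σ : Equiv.Perm (Fin n)) (i j : Fin n) : Prop :=
  (i < j ∧ j < σ i ∧ σ i < σ j) ∨ (σ i < σ j ∧ σ j ≤ i ∧ i < j)

noncomputable def crs {n : ℕ} (σ : Equiv.Perm (Fin n)) : ℕ :=
  (Finset.univ.filter (fun p : Fin n × Fin n => isCrossing σ p.1 p.2)).card

def avoids123 {n : ℕ} (σ : Equiv.Perm (Fin n)) : Prop :=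
  ¬ ∃ i j k : Fin n, i < j ∧ j < k ∧ σ i < σ j ∧ σ j < σ k

def avoids132 {n : ℕ} (σ : Equiv.Perm (Fin n)) : Prop :=
  ¬ ∃ i j k : Fin n, i < j ∧ j < k ∧ σ i < σ k ∧ σ k < σ j

def avoids213 {n : ℕ} (σ : Equiv.Perm (Fin n)) : Prop :=
  ¬ ∃ i j k : Fin n, i < j ∧ j < k ∧ σ j < σ i ∧ σ i < σ k

def avoids231 {n : ℕ} (σ : Equiv.Perm (Fin n)) : Prop :=
  ¬ ∃ i j k : Fin n, i < j ∧ j < k ∧ σ k < σ i ∧ σ i < σ j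

def avoids312 {n : ℕ} (σ : Equiv.Perm (Fin n)) : Prop :=
  ¬ ∃ i j k : Fin n, i < j ∧ j < k ∧ σ j < σ k ∧ σ k < σ i

def avoids321 {n : ℕ} (σ : Equiv.Perm (Fin n)) : Prop :=
  ¬ ∃ i j k : Fin n, i < j ∧ j < k ∧ σ k < σ j ∧ σ j < σ i

noncomputable def ut {n : ℕ} (σ : Equiv.Perm (Fin n)) : ℕ :=
  (Finset.univ.filter (fun i : Fin n => σ⁻¹ i < i ∧ i < σ i)).card

noncomputable def lt' {n : ℕ} (σ : Equiv.Perm (Fin n)) : ℕ :=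
  (Finset.univ.filter (fun i : Fin n => σ i < i ∧ i < σ⁻¹ i)).card

lemma exists_gt_of_image_gt {n : ℕ} (σ : Equiv.Perm (Fin n)) (i j : Fin n)
    (hij : i ≤ j) (h : j < σ i) : ∃ q, j < q ∧ σ q ≤ j := by
  by_contra hc
  push_neg at hc
  have hsub : (Finset.Iic j).image ⇑σ⁻¹ ⊆ Finset.Iic j := by
    intro v hv
    simp only [Finset.mem_image, Finset.mem_Iic] at hv ⊢
    obtain ⟨w, hw, rfl⟩ := hv
    by_contra hlt
    push_neg at hlt
    have := hc _ hlt
    rw [Equiv.Perm.inv_def, Equiv.apply_symm_apply] at this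
    exact absurd hw (not_le.mpr this)
  have heq : (Finset.Iic j).image ⇑σ⁻¹ = Finset.Iic j :=
    Finset.eq_of_subset_of_card_le hsub
      (by rw [Finset.card_image_of_injective _ (Equiv.injective _)])
  have hi : i ∈ (Finset.Iic j).image ⇑σ⁻¹ := by rw [heq]; exact Finset.mem_Iic.mpr hij
  obtain ⟨v, hv, hvi⟩ := Finset.mem_image.mp hi
  have : σ i = v := by rw [← hvi, Equiv.Perm.inv_def, Equiv.apply_symm_apply]
  exact absurd (Finset.mem_Iic.mp hv) (not_le.mpr (this ▸ h))

lemma exists_le_of_image_le {n : ℕ} (σ : Equiv.Perm (Fin n)) (i j : Fin n)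
    (hij : i < j) (h : σ j ≤ i) : ∃ p, p ≤ i ∧ i < σ p := by
  by_contra hc
  push_neg at hc
  have hsub : (Finset.Iic i).image σ ⊆ Finset.Iic i := by
    intro v hv
    simp only [Finset.mem_image, Finset.mem_Iic] at hv ⊢
    obtain ⟨w, hw, rfl⟩ := hv
    exact hc _ hw
  have heq : (Finset.Iic i).image σ = Finset.Iic i :=
    Finset.eq_of_subset_of_card_le hsub
      (by rw [Finset.card_image_of_injective _ (Equiv.injective _)])
  have hj : σ j ∈ (Finset.Iic i).image σ := by rw [heq]; exact Finset.mem_Iic.mpr h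
  obtain ⟨p, hp, hpj⟩ := Finset.mem_image.mp hj
  have : p = j := σ.injective hpj
  exact absurd (this ▸ Finset.mem_Iic.mp hp) (not_le.mpr hij)

theorem crs_zero_of_312_231 (n : ℕ) (σ : Equiv.Perm (Fin n))
    (h1 : avoids312 σ) (h2 : avoids231 σ) : crs σ = 0 := by
  rw [crs, Finset.card_eq_zero, Finset.filter_eq_empty_iff]
  rintro ⟨i, j⟩ -
  rintro (⟨hij, hjs, hss⟩ | ⟨hss, hsj, hij⟩)
  · obtain ⟨q, hjq, hq⟩ := exists_gt_of_image_gt σ i j hij.le hjs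
    exact h2 ⟨i, j, q, hij, hjq, lt_of_le_of_lt hq hjs, hss⟩
  · obtain ⟨p, hpi, hp⟩ := exists_le_of_image_le σ i j hij hsj
    have hpi' : p < i := lt_of_le_of_ne hpi (by
      rintro rfl
      exact absurd (lt_of_lt_of_le hss hsj) (not_lt.mpr hp.le))
    exact h1 ⟨p, i, j, hpi', hij, hss, lt_of_le_of_lt hsj hp⟩
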